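/- Let G be a finite simple graph in which every vertex has degree at least δ, where δ ≥ 1, let J be a δ-regular spanning subgraph of G with h edges, and let uv be an edge of J. Writing Δ(w) = deg_G(w) − δ, the probability that J ⊆ G_ω, e_{k(ω)} = uv, and both u and v have degree exactly δ in G_ω equals (h−1)! · (Δ(u)+Δ(v))! / (h + Δ(u) + Δ(v))!. -/
import Mathlib
open Finset
set_option linter.unusedSectionVars false

section CountCore
variable {α : Type*} [Fintype α] [DecidableEq α] {n : ℕ}

/-- positions occupied by elements of `T` under the ordering `σ`. -/
def posSet (T : Finset α) (σ : Fin n ≃ α) : Finset (Fin n) := T.image fun y => σ.symm y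

lemma card_posSet (T : Finset α) (σ : Fin n ≃ α) : (posSet T σ).card = T.card :=
  Finset.card_image_of_injective _ σ.symm.injective

/-- relative order of `T` under `σ`. -/
noncomputable def rho (T : Finset α) (σ : Fin n ≃ α) : Fin T.card ≃ {y : α // y ∈ T} :=
  ((posSet T σ).orderIsoOfFin (card_posSet T σ)).toEquiv.trans
    (Equiv.subtypeEquiv σ (fun i => by
      simp [posSet, Finset.mem_image, Equiv.eq_symm_apply, eq_comm]))

lemma rho_spec (T : Finset α) (σ : Fin n ≃ α) (i : Fin T.card) :
    σ.symm ↑(rho T σ i) = ((posSet T σ).orderIsoOfFin (card_posSet T σ) i : Fin n) := by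
  simp [rho, Equiv.subtypeEquiv]

/-- `π` is the relative order of `T` under `σ`. -/
def IsRho (T : Finset α) (σ : Fin n ≃ α) (π : Fin T.card ≃ {y : α // y ∈ T}) : Prop :=
  StrictMono fun i => σ.symm ↑(π i)

lemma isRho_rho (T : Finset α) (σ : Fin n ≃ α) : IsRho T σ (rho T σ) := by
  intro i j hij
  show σ.symm ↑(rho T σ i) < σ.symm ↑(rho T σ j)
  rw [rho_spec, rho_spec]
  exact_mod_cast ((posSet T σ).orderIsoOfFin (card_posSet T σ)).strictMono hij

lemma isRho_unique (T : Finset α) (σ : Fin n ≃ α) (π : Fin T.card ≃ {y : α // y ∈ T})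
    (hp : IsRho T σ π) : π = rho T σ := by
  have hmem : ∀ f : Fin T.card ≃ {y : α // y ∈ T}, ∀ i, σ.symm ↑(f i) ∈ posSet T σ := by
    intro f i
    exact Finset.mem_image.2 ⟨↑(f i), (f i).2, rfl⟩
  have e1 := Finset.orderEmbOfFin_unique (card_posSet T σ) (hmem π) hp
  have e2 := Finset.orderEmbOfFin_unique (card_posSet T σ) (hmem (rho T σ)) (isRho_rho T σ)
  apply Equiv.ext
  intro i
  have : σ.symm ↑(π i) = σ.symm ↑(rho T σ i) := by
    rw [congrFun e1 i, congrFun e2 i]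
  exact Subtype.ext (σ.symm.injective this)

/-- permutation of `α` sending `π1 i ↦ π2 i` on `T` and identity elsewhere. -/
def permOf (T : Finset α) (π1 π2 : Fin T.card ≃ {y : α // y ∈ T}) : Equiv.Perm α :=
  Equiv.Perm.subtypeCongr (π1.symm.trans π2) (Equiv.refl _)

lemma permOf_trans (T : Finset α) (a b c : Fin T.card ≃ {y : α // y ∈ T}) :
    (permOf T a b).trans (permOf T b c) = permOf T a c := by
  rw [permOf, permOf, permOf, Equiv.Perm.subtypeCongr.trans]
  congr 1
  ext y; simp

lemma permOf_self (T : Finset α) (a : Fin T.card ≃ {y : α // y ∈ T}) :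
    permOf T a a = Equiv.refl α := by
  rw [permOf, Equiv.symm_trans_self, Equiv.Perm.subtypeCongr.refl]

lemma permOf_apply_coe (T : Finset α) (a b : Fin T.card ≃ {y : α // y ∈ T}) (i : Fin T.card) :
    permOf T a b ↑(a i) = ↑(b i) := by
  rw [permOf, Equiv.Perm.subtypeCongr.left_apply _ _ (a i).2]
  congr 1
  simp

lemma permOf_symm_apply_coe (T : Finset α) (a b : Fin T.card ≃ {y : α // y ∈ T}) (i : Fin T.card) :
    (permOf T a b).symm ↑(b i) = ↑(a i) := by
  rw [Equiv.symm_apply_eq, permOf_apply_coe]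

lemma rho_trans_permOf (T : Finset α) (σ : Fin n ≃ α) (π π' : Fin T.card ≃ {y : α // y ∈ T})
    (hπ : rho T σ = π) : rho T (σ.trans (permOf T π π')) = π' := by
  refine (isRho_unique T _ π' ?_).symm
  intro i j hij
  simp only [Equiv.symm_trans_apply]
  have : ∀ k, (permOf T π π').symm ↑(π' k) = (↑(π k) : α) := permOf_symm_apply_coe T π π'
  rw [this i, this j]
  subst hπ
  exact isRho_rho T σ hij

variable (T : Finset α) (π0 : Fin T.card ≃ {y : α // y ∈ T})

/-- the decomposition of an ordering into relative order on `T` and canonical part. -/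
noncomputable def Phi : (Fin n ≃ α) ≃ (Fin T.card ≃ {y : α // y ∈ T}) × {σ : Fin n ≃ α // rho T σ = π0} where
  toFun σ := (rho T σ, ⟨σ.trans (permOf T (rho T σ) π0), rho_trans_permOf T σ _ _ rfl⟩)
  invFun p := p.2.1.trans (permOf T π0 p.1)
  left_inv σ := by
    show (σ.trans (permOf T (rho T σ) π0)).trans (permOf T π0 (rho T σ)) = σ
    rw [Equiv.trans_assoc, permOf_trans, permOf_self, Equiv.trans_refl]
  right_inv p := by
    obtain ⟨π, τ, hτ⟩ := p
    have h1 : rho T (τ.trans (permOf T π0 π)) = π := rho_trans_permOf T τ π0 π hτ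
    refine Prod.ext h1 (Subtype.ext ?_)
    show (τ.trans (permOf T π0 π)).trans (permOf T (rho T (τ.trans (permOf T π0 π))) π0) = ↑(⟨τ, hτ⟩ : {σ : Fin n ≃ α // rho T σ = π0})
    rw [h1, Equiv.trans_assoc, permOf_trans, permOf_self, Equiv.trans_refl]

lemma Phi_fst (σ : Fin n ≃ α) : (Phi T π0 σ).1 = rho T σ := rfl

end CountCore

section Glue
variable {α : Type*} [DecidableEq α]
variable (T B A : Finset α) (x : α)

/-- matching up `T` with `B ⊕ ({x} ⊕ A)`. -/
def WE (hxT : x ∈ T) (hB : B ⊆ T) (hA : A ⊆ T) (hxB : x ∉ B) (hxA : x ∉ A)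
    (hBA : Disjoint B A) (hT : ∀ y ∈ T, y ∈ B ∨ y = x ∨ y ∈ A) :
    (↥B ⊕ (Fin 1 ⊕ ↥A)) ≃ {y : α // y ∈ T} where
  toFun p := match p with
    | .inl y => ⟨↑y, hB y.2⟩
    | .inr (.inl _) => ⟨x, hxT⟩
    | .inr (.inr z) => ⟨↑z, hA z.2⟩
  invFun w := if h : (w : α) ∈ B then .inl ⟨↑w, h⟩ else if h2 : (w : α) ∈ A then .inr (.inr ⟨↑w, h2⟩)
    else .inr (.inl 0)
  left_inv p := by
    match p with
    | .inl y => simp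
    | .inr (.inl u) =>
        obtain rfl : u = 0 := Subsingleton.elim u 0
        simp only [dif_neg hxB, dif_neg hxA]
    | .inr (.inr z) =>
        have : (z : α) ∉ B := fun hz => (Finset.disjoint_left.mp hBA) hz z.2
        simp [this]
  right_inv w := by
    by_cases h : (w : α) ∈ B
    · simp [h]
    · by_cases h2 : (w : α) ∈ A
      · simp [h, h2]
      · have : (w : α) = x := by
          rcases hT ↑w w.2 with h' | h' | h' <;> tauto
        simp only [dif_neg h, dif_neg h2]
        exact Subtype.ext this.symm

variable (htc : T.card = B.card + (1 + A.card))
  (hxT : x ∈ T) (hB : B ⊆ T) (hA : A ⊆ T) (hxB : x ∉ B) (hxA : x ∉ A)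
  (hBA : Disjoint B A) (hT : ∀ y ∈ T, y ∈ B ∨ y = x ∨ y ∈ A)

/-- glue a pair of orderings of `B` and `A` into an ordering of `T` with `B` first,
then `x`, then `A`. -/
def glueMap (f : Fin B.card ≃ ↥B) (g : Fin A.card ≃ ↥A) : Fin T.card ≃ {y : α // y ∈ T} :=
  (finCongr htc).trans <| finSumFinEquiv.symm.trans <|
    (Equiv.sumCongr f (finSumFinEquiv.symm.trans (Equiv.sumCongr (Equiv.refl (Fin 1)) g))).trans
      (WE T B A x hxT hB hA hxB hxA hBA hT)

variable {T B A x}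

lemma glueMap_apply_lt (f : Fin B.card ≃ ↥B) (g : Fin A.card ≃ ↥A) (i : Fin T.card)
    (hi : (i : ℕ) < B.card) :
    glueMap T B A x htc hxT hB hA hxB hxA hBA hT f g i = ⟨↑(f ⟨i, hi⟩), hB (f ⟨i, hi⟩).2⟩ := by
  have h0 : finCongr htc i = Fin.castAdd (1 + A.card) ⟨i, hi⟩ := by
    apply Fin.ext; simp
  simp only [glueMap, Equiv.trans_apply, h0, finSumFinEquiv_symm_apply_castAdd,
    Equiv.sumCongr_apply, Sum.map_inl, WE, Equiv.coe_fn_mk]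

lemma glueMap_apply_eq (f : Fin B.card ≃ ↥B) (g : Fin A.card ≃ ↥A) (i : Fin T.card)
    (hi : (i : ℕ) = B.card) :
    glueMap T B A x htc hxT hB hA hxB hxA hBA hT f g i = ⟨x, hxT⟩ := by
  have h0 : finCongr htc i = Fin.natAdd B.card (⟨0, by omega⟩ : Fin (1 + A.card)) := by
    apply Fin.ext; simp [hi]
  have h1 : (⟨0, by omega⟩ : Fin (1 + A.card)) = Fin.castAdd A.card (0 : Fin 1) := by
    apply Fin.ext; simp
  simp only [glueMap, Equiv.trans_apply, h0, finSumFinEquiv_symm_apply_natAdd,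
    Equiv.sumCongr_apply, Sum.map_inr, Function.comp_apply, h1,
    finSumFinEquiv_symm_apply_castAdd, Sum.map_inl, Equiv.refl_apply, WE, Equiv.coe_fn_mk]

lemma glueMap_apply_gt (f : Fin B.card ≃ ↥B) (g : Fin A.card ≃ ↥A) (i : Fin T.card)
    (hi : B.card < (i : ℕ)) (hi2 : (i : ℕ) - (B.card + 1) < A.card) :
    glueMap T B A x htc hxT hB hA hxB hxA hBA hT f g i
      = ⟨↑(g ⟨(i : ℕ) - (B.card + 1), hi2⟩), hA (g ⟨(i : ℕ) - (B.card + 1), hi2⟩).2⟩ := by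
  have hb : (i : ℕ) - B.card < 1 + A.card := by have := i.2; omega
  have h0 : finCongr htc i = Fin.natAdd B.card (⟨(i : ℕ) - B.card, hb⟩ : Fin (1 + A.card)) := by
    apply Fin.ext; simp; omega
  have h1 : (⟨(i : ℕ) - B.card, hb⟩ : Fin (1 + A.card))
      = Fin.natAdd 1 ⟨(i : ℕ) - (B.card + 1), hi2⟩ := by
    apply Fin.ext; simp; omega
  simp only [glueMap, Equiv.trans_apply, h0, finSumFinEquiv_symm_apply_natAdd,
    Equiv.sumCongr_apply, Sum.map_inr, Function.comp_apply, h1,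
    Sum.map_inr, WE, Equiv.coe_fn_mk]

end Glue

section GoodCount
variable {α : Type*} [DecidableEq α]
variable (T B A : Finset α) (x : α) (hxT : x ∈ T)

/-- a relative order of `T` is good if all of `B` precedes `x` and `x` precedes all of `A`. -/
def GoodOrd (π : Fin T.card ≃ {y : α // y ∈ T}) : Prop :=
  (∀ y : {y : α // y ∈ T}, ↑y ∈ B → π.symm y < π.symm ⟨x, hxT⟩) ∧
  (∀ z : {y : α // y ∈ T}, ↑z ∈ A → π.symm ⟨x, hxT⟩ < π.symm z)

variable {T B A x}
variable (htc : T.card = B.card + (1 + A.card))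
  (hB : B ⊆ T) (hA : A ⊆ T) (hxB : x ∉ B) (hxA : x ∉ A)
  (hBA : Disjoint B A) (hT : ∀ y ∈ T, y ∈ B ∨ y = x ∨ y ∈ A)

include htc hB hA hxB hxA hBA hT

lemma goodOrd_pos_x (π : Fin T.card ≃ {y : α // y ∈ T}) (hg : GoodOrd T B A x hxT π) :
    ((π.symm ⟨x, hxT⟩ : Fin T.card) : ℕ) = B.card := by
  set p := π.symm ⟨x, hxT⟩ with hp
  have hinj : Function.Injective (fun i : Fin T.card => ((π i : {y : α // y ∈ T}) : α)) :=
    fun i j hij => π.injective (Subtype.ext hij)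
  have himg : Finset.image (fun i : Fin T.card => ((π i : {y : α // y ∈ T}) : α)) (Finset.Iio p) = B := by
    ext y
    simp only [Finset.mem_image, Finset.mem_Iio]
    constructor
    · rintro ⟨i, hip, rfl⟩
      rcases hT ↑(π i) (π i).2 with h' | h' | h'
      · exact h'
      · exfalso
        have : π i = ⟨x, hxT⟩ := Subtype.ext h'
        rw [← this, Equiv.symm_apply_apply] at hp
        omega
      · exact absurd (hg.2 (π i) h') (by simp [hip.le, ← hp, Equiv.symm_apply_apply, not_lt, hip.le])
    · intro hy
      refine ⟨π.symm ⟨y, hB hy⟩, hg.1 ⟨y, hB hy⟩ hy, by simp⟩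
  have := Finset.card_image_of_injective (Finset.Iio p) hinj
  rw [himg, Fin.card_Iio] at this
  omega

lemma goodOrd_apply_lt (π : Fin T.card ≃ {y : α // y ∈ T}) (hg : GoodOrd T B A x hxT π)
    (i : Fin T.card) (hi : (i : ℕ) < B.card) : ((π i : {y : α // y ∈ T}) : α) ∈ B := by
  rcases hT ↑(π i) (π i).2 with h' | h' | h'
  · exact h'
  · exfalso
    have hpi : π i = ⟨x, hxT⟩ := Subtype.ext h'
    have : π.symm ⟨x, hxT⟩ = i := by rw [← hpi, Equiv.symm_apply_apply]
    have := goodOrd_pos_x hxT htc hB hA hxB hxA hBA hT π hg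
    omega
  · exfalso
    have h2 := hg.2 (π i) h'
    rw [Equiv.symm_apply_apply, Fin.lt_def, goodOrd_pos_x hxT htc hB hA hxB hxA hBA hT π hg] at h2
    omega

lemma goodOrd_apply_eq (π : Fin T.card ≃ {y : α // y ∈ T}) (hg : GoodOrd T B A x hxT π)
    (i : Fin T.card) (hi : (i : ℕ) = B.card) : π i = ⟨x, hxT⟩ := by
  have : i = π.symm ⟨x, hxT⟩ := by
    apply Fin.ext
    rw [goodOrd_pos_x hxT htc hB hA hxB hxA hBA hT π hg, hi]
  rw [this, Equiv.apply_symm_apply]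

lemma goodOrd_apply_gt (π : Fin T.card ≃ {y : α // y ∈ T}) (hg : GoodOrd T B A x hxT π)
    (i : Fin T.card) (hi : B.card < (i : ℕ)) : ((π i : {y : α // y ∈ T}) : α) ∈ A := by
  rcases hT ↑(π i) (π i).2 with h' | h' | h'
  · exfalso
    have h2 := hg.1 (π i) h'
    rw [Equiv.symm_apply_apply, Fin.lt_def, goodOrd_pos_x hxT htc hB hA hxB hxA hBA hT π hg] at h2
    omega
  · exfalso
    have hpi : π i = ⟨x, hxT⟩ := Subtype.ext h'
    have : π.symm ⟨x, hxT⟩ = i := by rw [← hpi, Equiv.symm_apply_apply]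
    have := goodOrd_pos_x hxT htc hB hA hxB hxA hBA hT π hg
    omega
  · exact h'

lemma goodOrd_glueMap (hxT' : x ∈ T) (f : Fin B.card ≃ ↥B) (g : Fin A.card ≃ ↥A) :
    GoodOrd T B A x hxT (glueMap T B A x htc hxT' hB hA hxB hxA hBA hT f g) := by
  set π := glueMap T B A x htc hxT' hB hA hxB hxA hBA hT f g with hπ
  have hpx : ((π.symm ⟨x, hxT⟩ : Fin T.card) : ℕ) = B.card := by
    set j := π.symm ⟨x, hxT⟩ with hj
    have hπj : π j = ⟨x, hxT⟩ := Equiv.apply_symm_apply _ _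
    rcases lt_trichotomy ((j : Fin T.card) : ℕ) B.card with hlt | heq | hgt
    · exfalso
      rw [glueMap_apply_lt htc hxT' hB hA hxB hxA hBA hT f g j hlt] at hπj
      have : ((f ⟨(j : ℕ), hlt⟩ : ↥B) : α) = x := by
        simpa [Subtype.ext_iff] using hπj
      exact hxB (this ▸ (f ⟨(j : ℕ), hlt⟩).2)
    · exact heq
    · exfalso
      have hi2 : (j : ℕ) - (B.card + 1) < A.card := by have := j.2; omega
      rw [glueMap_apply_gt htc hxT' hB hA hxB hxA hBA hT f g j hgt hi2] at hπj
      have : ((g ⟨(j : ℕ) - (B.card + 1), hi2⟩ : ↥A) : α) = x := by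
        simpa [Subtype.ext_iff] using hπj
      exact hxA (this ▸ (g ⟨(j : ℕ) - (B.card + 1), hi2⟩).2)
  constructor
  · intro y hy
    set i := π.symm y with hi
    have hπi : π i = y := Equiv.apply_symm_apply _ _
    rw [Fin.lt_def, hpx]
    rcases lt_trichotomy ((i : Fin T.card) : ℕ) B.card with hlt | heq | hgt
    · exact hlt
    · exfalso
      rw [glueMap_apply_eq htc hxT' hB hA hxB hxA hBA hT f g i heq] at hπi
      exact hxB (by rw [show x = (y : α) from congrArg Subtype.val hπi]; exact hy)
    · exfalso
      have hi2 : (i : ℕ) - (B.card + 1) < A.card := by have := i.2; omega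
      rw [glueMap_apply_gt htc hxT' hB hA hxB hxA hBA hT f g i hgt hi2] at hπi
      have : (y : α) ∈ A := by
        rw [← congrArg Subtype.val hπi]; exact (g _).2
      exact (Finset.disjoint_left.mp hBA) hy this
  · intro z hz
    set i := π.symm z with hi
    have hπi : π i = z := Equiv.apply_symm_apply _ _
    rw [Fin.lt_def, hpx]
    rcases lt_trichotomy ((i : Fin T.card) : ℕ) B.card with hlt | heq | hgt
    · exfalso
      rw [glueMap_apply_lt htc hxT' hB hA hxB hxA hBA hT f g i hlt] at hπi
      have : (z : α) ∈ B := by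
        rw [← congrArg Subtype.val hπi]; exact (f _).2
      exact (Finset.disjoint_left.mp hBA) this hz
    · exfalso
      rw [glueMap_apply_eq htc hxT' hB hA hxB hxA hBA hT f g i heq] at hπi
      exact hxA (by rw [show x = (z : α) from congrArg Subtype.val hπi]; exact hz)
    · exact hgt

end GoodCount

section GoodCount2
variable {α : Type*} [DecidableEq α]
variable {T B A : Finset α} {x : α} (hxT : x ∈ T)
  (htc : T.card = B.card + (1 + A.card))
  (hB : B ⊆ T) (hA : A ⊆ T) (hxB : x ∉ B) (hxA : x ∉ A)
  (hBA : Disjoint B A) (hT : ∀ y ∈ T, y ∈ B ∨ y = x ∨ y ∈ A)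

include hxT htc hB hA hxB hxA hBA hT

lemma card_goodOrd :
    Nat.card {π : Fin T.card ≃ {y : α // y ∈ T} // GoodOrd T B A x hxT π}
      = B.card.factorial * A.card.factorial := by
  have key : Function.Bijective
      (fun p : (Fin B.card ≃ ↥B) × (Fin A.card ≃ ↥A) =>
        (⟨glueMap T B A x htc hxT hB hA hxB hxA hBA hT p.1 p.2,
          goodOrd_glueMap hxT htc hB hA hxB hxA hBA hT hxT p.1 p.2⟩ :
          {π : Fin T.card ≃ {y : α // y ∈ T} // GoodOrd T B A x hxT π})) := by
    constructor
    · rintro ⟨f, g⟩ ⟨f', g'⟩ hfg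
      have heq : glueMap T B A x htc hxT hB hA hxB hxA hBA hT f g
          = glueMap T B A x htc hxT hB hA hxB hxA hBA hT f' g' := congrArg Subtype.val hfg
      have hf : f = f' := by
        apply Equiv.ext; intro k
        have hkT : (k : ℕ) < T.card := by have := k.2; omega
        have h1 := glueMap_apply_lt htc hxT hB hA hxB hxA hBA hT f g ⟨k, hkT⟩ k.2
        have h2 := glueMap_apply_lt htc hxT hB hA hxB hxA hBA hT f' g' ⟨k, hkT⟩ k.2
        rw [heq] at h1
        have h3 := congrArg Subtype.val (h1.symm.trans h2)
        have h4 : (⟨((⟨(k : ℕ), hkT⟩ : Fin T.card) : ℕ), k.2⟩ : Fin B.card) = k := Fin.ext rfl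
        rw [h4] at h3
        exact Subtype.ext h3
      have hg : g = g' := by
        apply Equiv.ext; intro k
        have hkT : B.card + 1 + (k : ℕ) < T.card := by have := k.2; omega
        have hgt : B.card < ((⟨B.card + 1 + (k : ℕ), hkT⟩ : Fin T.card) : ℕ) := by
          show B.card < B.card + 1 + (k : ℕ); omega
        have hi2 : ((⟨B.card + 1 + (k : ℕ), hkT⟩ : Fin T.card) : ℕ) - (B.card + 1) < A.card := by
          show B.card + 1 + (k : ℕ) - (B.card + 1) < A.card; have := k.2; omega
        have h1 := glueMap_apply_gt htc hxT hB hA hxB hxA hBA hT f g ⟨B.card + 1 + k, hkT⟩ hgt hi2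
        have h2 := glueMap_apply_gt htc hxT hB hA hxB hxA hBA hT f' g' ⟨B.card + 1 + k, hkT⟩ hgt hi2
        rw [heq] at h1
        have h3 := congrArg Subtype.val (h1.symm.trans h2)
        have h4 : (⟨((⟨B.card + 1 + (k : ℕ), hkT⟩ : Fin T.card) : ℕ) - (B.card + 1), hi2⟩ : Fin A.card) = k := by
          apply Fin.ext
          show B.card + 1 + (k : ℕ) - (B.card + 1) = (k : ℕ)
          omega
        rw [h4] at h3
        exact Subtype.ext h3
      rw [Prod.ext_iff]; exact ⟨hf, hg⟩
    · rintro ⟨π, hgood⟩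
      have hbT : ∀ k : Fin B.card, (k : ℕ) < T.card := fun k => by have := k.2; omega
      have haT : ∀ k : Fin A.card, B.card + 1 + (k : ℕ) < T.card := fun k => by have := k.2; omega
      set F : Fin B.card → ↥B := fun k =>
        ⟨↑(π ⟨k, hbT k⟩),
          goodOrd_apply_lt hxT htc hB hA hxB hxA hBA hT π hgood ⟨k, hbT k⟩ k.2⟩ with hF
      have hFbij : Function.Bijective F := by
        constructor
        · intro k k' hkk
          have h0 : ((F k : ↥B) : α) = ((F k' : ↥B) : α) := congrArg Subtype.val hkk
          have h1 : π ⟨k, hbT k⟩ = π ⟨k', hbT k'⟩ := Subtype.ext h0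
          have h2 := congrArg Fin.val (π.injective h1)
          apply Fin.ext
          show (k : ℕ) = (k' : ℕ)
          simpa using h2
        · intro y
          have hyT : (y : α) ∈ T := hB y.2
          set i := π.symm ⟨↑y, hyT⟩ with hidef
          have hi : (i : ℕ) < B.card := by
            have h1 := hgood.1 ⟨↑y, hyT⟩ y.2
            rw [Fin.lt_def, goodOrd_pos_x hxT htc hB hA hxB hxA hBA hT π hgood] at h1
            exact h1
          refine ⟨⟨i, hi⟩, Subtype.ext ?_⟩
          show ((π ⟨(i : ℕ), _⟩ : {y : α // y ∈ T}) : α) = (y : α)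
          have h5 : (⟨(i : ℕ), hbT ⟨i, hi⟩⟩ : Fin T.card) = i := Fin.ext rfl
          rw [h5, hidef, Equiv.apply_symm_apply]
      set G : Fin A.card → ↥A := fun k =>
        ⟨↑(π ⟨B.card + 1 + k, haT k⟩),
          goodOrd_apply_gt hxT htc hB hA hxB hxA hBA hT π hgood ⟨B.card + 1 + k, haT k⟩
            (by show B.card < B.card + 1 + (k : ℕ); omega)⟩ with hG
      have hGbij : Function.Bijective G := by
        constructor
        · intro k k' hkk
          have h0 : ((G k : ↥A) : α) = ((G k' : ↥A) : α) := congrArg Subtype.val hkk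
          have h1 : π ⟨B.card + 1 + k, haT k⟩ = π ⟨B.card + 1 + k', haT k'⟩ := Subtype.ext h0
          have h2 := congrArg Fin.val (π.injective h1)
          apply Fin.ext
          show (k : ℕ) = (k' : ℕ)
          simpa using h2
        · intro z
          have hzT : (z : α) ∈ T := hA z.2
          set i := π.symm ⟨↑z, hzT⟩ with hidef
          have hi : B.card < (i : ℕ) := by
            have h1 := hgood.2 ⟨↑z, hzT⟩ z.2
            rw [Fin.lt_def, goodOrd_pos_x hxT htc hB hA hxB hxA hBA hT π hgood] at h1
            exact h1
          have hik : (i : ℕ) - (B.card + 1) < A.card := by have := i.2; omega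
          refine ⟨⟨(i : ℕ) - (B.card + 1), hik⟩, Subtype.ext ?_⟩
          show ((π ⟨B.card + 1 + ((i : ℕ) - (B.card + 1)), _⟩ : {y : α // y ∈ T}) : α) = (z : α)
          have h5 : (⟨B.card + 1 + ((i : ℕ) - (B.card + 1)), haT ⟨(i : ℕ) - (B.card + 1), hik⟩⟩ : Fin T.card) = i := by
            apply Fin.ext; show B.card + 1 + ((i : ℕ) - (B.card + 1)) = (i : ℕ); omega
          rw [h5, hidef, Equiv.apply_symm_apply]
      refine ⟨(Equiv.ofBijective F hFbij, Equiv.ofBijective G hGbij), Subtype.ext ?_⟩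
      apply Equiv.ext
      intro i
      rcases lt_trichotomy ((i : Fin T.card) : ℕ) B.card with hlt | heq | hgt
      · rw [glueMap_apply_lt htc hxT hB hA hxB hxA hBA hT _ _ i hlt]
        apply Subtype.ext
        show ((F ⟨(i : ℕ), hlt⟩ : ↥B) : α) = _
        rw [hF]
      · rw [glueMap_apply_eq htc hxT hB hA hxB hxA hBA hT _ _ i heq]
        exact (goodOrd_apply_eq hxT htc hB hA hxB hxA hBA hT π hgood i heq).symm
      · have hi2 : (i : ℕ) - (B.card + 1) < A.card := by have := i.2; omega
        rw [glueMap_apply_gt htc hxT hB hA hxB hxA hBA hT _ _ i hgt hi2]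
        apply Subtype.ext
        show ((G ⟨(i : ℕ) - (B.card + 1), hi2⟩ : ↥A) : α) = _
        rw [hG]
        show ((π ⟨B.card + 1 + ((i : ℕ) - (B.card + 1)), haT ⟨(i : ℕ) - (B.card + 1), hi2⟩⟩ : {y : α // y ∈ T}) : α)
          = ((π i : {y : α // y ∈ T}) : α)
        have h6 : (⟨B.card + 1 + ((i : ℕ) - (B.card + 1)), haT ⟨(i : ℕ) - (B.card + 1), hi2⟩⟩ : Fin T.card) = i := by
          apply Fin.ext
          show B.card + 1 + ((i : ℕ) - (B.card + 1)) = (i : ℕ)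
          omega
        rw [h6]
  rw [Nat.card_congr (Equiv.ofBijective _ key).symm, Nat.card_prod,
    Nat.card_eq_fintype_card, Nat.card_eq_fintype_card,
    Fintype.card_equiv (B.equivFin.symm), Fintype.card_equiv (A.equivFin.symm),
    Fintype.card_fin, Fintype.card_fin]

end GoodCount2

section Master
variable {α : Type*} [Fintype α] [DecidableEq α] {n : ℕ}

lemma rho_symm_lt_iff (T : Finset α) (σ : Fin n ≃ α) (y z : {w : α // w ∈ T}) :
    (rho T σ).symm y < (rho T σ).symm z ↔ σ.symm ↑y < σ.symm ↑z := by
  have h1 : ∀ w : {w : α // w ∈ T},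
      σ.symm ↑w = ((posSet T σ).orderIsoOfFin (card_posSet T σ) ((rho T σ).symm w) : Fin n) := by
    intro w
    conv_lhs => rw [← Equiv.apply_symm_apply (rho T σ) w]
    rw [rho_spec]
  rw [h1 y, h1 z, Subtype.coe_lt_coe, OrderIso.lt_iff_lt]

/-- {p : X × Y // Q p.1} ≃ {x // Q x} × Y -/
def prodSubtypeFst {X Y : Type*} {Q : X → Prop} : {p : X × Y // Q p.1} ≃ ({x : X // Q x} × Y) where
  toFun p := (⟨p.1.1, p.2⟩, p.1.2)
  invFun q := ⟨(↑q.1, q.2), q.1.2⟩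
  left_inv p := rfl
  right_inv q := rfl

theorem count_main (hn : Fintype.card α = n) (x : α) (B A : Finset α)
    (hxB : x ∉ B) (hxA : x ∉ A) (hBA : Disjoint B A) :
    Nat.card {σ : Fin n ≃ α //
        (∀ y ∈ B, σ.symm y < σ.symm x) ∧ (∀ z ∈ A, σ.symm x < σ.symm z)}
      * (B.card + A.card + 1).factorial
      = B.card.factorial * A.card.factorial * n.factorial := by
  classical
  set T : Finset α := insert x (B ∪ A) with hTdef
  have hxT : x ∈ T := Finset.mem_insert_self _ _
  have hB : B ⊆ T := fun y hy => Finset.mem_insert_of_mem (Finset.mem_union_left _ hy)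
  have hA : A ⊆ T := fun y hy => Finset.mem_insert_of_mem (Finset.mem_union_right _ hy)
  have htc' : T.card = B.card + A.card + 1 := by
    rw [hTdef, Finset.card_insert_of_notMem (by simp [hxB, hxA]),
      Finset.card_union_of_disjoint hBA]
  have htc : T.card = B.card + (1 + A.card) := by omega
  have hT : ∀ y ∈ T, y ∈ B ∨ y = x ∨ y ∈ A := by
    intro y hy
    rw [hTdef, Finset.mem_insert, Finset.mem_union] at hy
    tauto
  set π0 : Fin T.card ≃ {y : α // y ∈ T} := T.equivFin.symm with hπ0
  have hiff : ∀ σ : Fin n ≃ α,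
      ((∀ y ∈ B, σ.symm y < σ.symm x) ∧ (∀ z ∈ A, σ.symm x < σ.symm z))
        ↔ GoodOrd T B A x hxT ((Phi T π0 σ).1) := by
    intro σ
    rw [Phi_fst]
    constructor
    · rintro ⟨h1, h2⟩
      exact ⟨fun y hy => (rho_symm_lt_iff T σ y ⟨x, hxT⟩).2 (h1 ↑y hy),
        fun z hz => (rho_symm_lt_iff T σ ⟨x, hxT⟩ z).2 (h2 ↑z hz)⟩
    · rintro ⟨h1, h2⟩
      refine ⟨fun y hy => ?_, fun z hz => ?_⟩
      · exact (rho_symm_lt_iff T σ ⟨y, hB hy⟩ ⟨x, hxT⟩).1 (h1 ⟨y, hB hy⟩ hy)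
      · exact (rho_symm_lt_iff T σ ⟨x, hxT⟩ ⟨z, hA hz⟩).1 (h2 ⟨z, hA hz⟩ hz)
  have e1 : {σ : Fin n ≃ α //
        (∀ y ∈ B, σ.symm y < σ.symm x) ∧ (∀ z ∈ A, σ.symm x < σ.symm z)}
      ≃ ({π : Fin T.card ≃ {y : α // y ∈ T} // GoodOrd T B A x hxT π}
          × {σ : Fin n ≃ α // rho T σ = π0}) :=
    (Equiv.subtypeEquiv (Phi T π0) hiff).trans prodSubtypeFst
  have hN : Nat.card {σ : Fin n ≃ α //
        (∀ y ∈ B, σ.symm y < σ.symm x) ∧ (∀ z ∈ A, σ.symm x < σ.symm z)}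
      = (B.card.factorial * A.card.factorial) * Nat.card {σ : Fin n ≃ α // rho T σ = π0} := by
    rw [Nat.card_congr e1, Nat.card_prod,
      card_goodOrd hxT htc hB hA hxB hxA hBA hT]
  have hfull : n.factorial = T.card.factorial * Nat.card {σ : Fin n ≃ α // rho T σ = π0} := by
    have h2 : Nat.card (Fin n ≃ α) = Nat.card
        ((Fin T.card ≃ {y : α // y ∈ T}) × {σ : Fin n ≃ α // rho T σ = π0}) :=
      Nat.card_congr (Phi T π0)
    rw [Nat.card_prod, Nat.card_eq_fintype_card, Nat.card_eq_fintype_card,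
      Fintype.card_equiv (Fintype.equivFinOfCardEq hn).symm,
      Fintype.card_equiv π0, Fintype.card_fin, Fintype.card_fin] at h2
    rw [← h2]
  rw [hN, ← htc', mul_assoc, mul_comm (Nat.card _) (T.card.factorial), ← hfull, mul_assoc]

end Master


/-- The degree of a vertex `v` in the graph whose edge set is the finite set `s`
of edges (elements of `Sym2 V`). -/
def degIn {V : Type*} [DecidableEq V] (s : Finset (Sym2 V)) (v : V) : ℕ :=
  (s.filter (fun e => v ∈ e)).card

/-- Given an ordering `ω` of a finite set `s` of edges, the set consisting of the
first `i` edges `e_{ω(1)}, …, e_{ω(i)}`. -/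
def prefixEdges {V : Type*} [DecidableEq V] {s : Finset (Sym2 V)}
    (ω : Fin s.card ≃ {e : Sym2 V // e ∈ s}) (i : ℕ) : Finset (Sym2 V) :=
  (Finset.univ.filter (fun j : Fin s.card => (j : ℕ) < i)).image (fun j => (ω j : Sym2 V))

/-- `k(ω)`: the least `i` such that every vertex has degree at least `δ` in the graph
formed by the first `i` edges of the ordering `ω`. -/
noncomputable def stopIndex {V : Type*} [Fintype V] [DecidableEq V] (δ : ℕ)
    {s : Finset (Sym2 V)} (ω : Fin s.card ≃ {e : Sym2 V // e ∈ s}) : ℕ :=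
  sInf {i | ∀ v : V, δ ≤ degIn (prefixEdges ω i) v}

/-- The edge set of `G_ω`, i.e. the first `k(ω)` edges of the ordering `ω`. -/
noncomputable def finalEdges {V : Type*} [Fintype V] [DecidableEq V] (δ : ℕ)
    {s : Finset (Sym2 V)} (ω : Fin s.card ≃ {e : Sym2 V // e ∈ s}) : Finset (Sym2 V) :=
  prefixEdges ω (stopIndex δ ω)

/-- A graph is `δ`-regular: every vertex has exactly `δ` neighbours. -/
def regOfDegree {V : Type*} (J : SimpleGraph V) (δ : ℕ) : Prop :=
  ∀ v : V, (J.neighborSet v).ncard = δ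

/-- `e` is the last edge `e_{k(ω)}` of `G_ω`: it belongs to the first `k(ω)` edges but
not to the first `k(ω) − 1` edges. -/
noncomputable def lastEdgeIs {V : Type*} [Fintype V] [DecidableEq V] (δ : ℕ)
    {s : Finset (Sym2 V)} (ω : Fin s.card ≃ {e : Sym2 V // e ∈ s}) (e : Sym2 V) : Prop :=
  e ∈ prefixEdges ω (stopIndex δ ω) ∧ e ∉ prefixEdges ω (stopIndex δ ω - 1)


section Events
variable {V : Type*} [Fintype V] [DecidableEq V]

lemma degIn_mono {s t : Finset (Sym2 V)} (hst : s ⊆ t) (w : V) : degIn s w ≤ degIn t w :=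
  Finset.card_le_card (Finset.filter_subset_filter _ hst)

lemma degIn_edgeFinset (G : SimpleGraph V) [DecidableRel G.Adj] (w : V) :
    degIn G.edgeFinset w = G.degree w := by
  unfold degIn
  rw [← SimpleGraph.incidenceFinset_eq_filter, SimpleGraph.card_incidenceFinset_eq_degree]

lemma mem_prefixEdges {s : Finset (Sym2 V)} (ω : Fin s.card ≃ {e : Sym2 V // e ∈ s}) (i : ℕ)
    (e : Sym2 V) :
    e ∈ prefixEdges ω i ↔ ∃ he : e ∈ s, ((ω.symm ⟨e, he⟩ : Fin s.card) : ℕ) < i := by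
  unfold prefixEdges
  simp only [Finset.mem_image, Finset.mem_filter, Finset.mem_univ, true_and]
  constructor
  · rintro ⟨j, hj, rfl⟩
    refine ⟨(ω j).2, ?_⟩
    have h1 : (⟨↑(ω j), (ω j).2⟩ : {e : Sym2 V // e ∈ s}) = ω j := Subtype.ext rfl
    rw [h1, Equiv.symm_apply_apply]
    exact hj
  · rintro ⟨he, hlt⟩
    exact ⟨ω.symm ⟨e, he⟩, hlt, by rw [Equiv.apply_symm_apply]⟩

lemma prefixEdges_full {s : Finset (Sym2 V)} (ω : Fin s.card ≃ {e : Sym2 V // e ∈ s}) :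
    prefixEdges ω s.card = s := by
  ext e
  rw [mem_prefixEdges]
  constructor
  · rintro ⟨he, _⟩; exact he
  · intro he; exact ⟨he, (ω.symm ⟨e, he⟩).2⟩

end Events

section EventChar
variable {V : Type*} [Fintype V] [DecidableEq V]

lemma event_iff (G J : SimpleGraph V) [DecidableRel G.Adj] [DecidableRel J.Adj]
    (δ : ℕ) (hδ : 1 ≤ δ) (hGdeg : ∀ w : V, δ ≤ G.degree w)
    (hJG : J ≤ G) (hJ : J.IsRegularOfDegree δ)
    (u v : V) (huv : J.Adj u v) (hxG : s(u, v) ∈ G.edgeFinset)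
    (ω : Fin G.edgeFinset.card ≃ {e : Sym2 V // e ∈ G.edgeFinset}) :
    (J.edgeSet ⊆ ↑(finalEdges δ ω) ∧ lastEdgeIs δ ω s(u, v) ∧
      degIn (finalEdges δ ω) u = δ ∧ degIn (finalEdges δ ω) v = δ) ↔
    ((∀ e, ∀ he : e ∈ G.edgeFinset, e ∈ J.edgeFinset → e ≠ s(u, v) →
        ω.symm ⟨e, he⟩ < ω.symm ⟨s(u, v), hxG⟩) ∧
     (∀ e, ∀ he : e ∈ G.edgeFinset, e ∉ J.edgeFinset → (u ∈ e ∨ v ∈ e) →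
        ω.symm ⟨s(u, v), hxG⟩ < ω.symm ⟨e, he⟩)) := by
  classical
  have hxJ : s(u, v) ∈ J.edgeFinset := SimpleGraph.mem_edgeFinset.2 huv
  have hJGsub : J.edgeFinset ⊆ G.edgeFinset :=
    SimpleGraph.edgeFinset_subset_edgeFinset.2 hJG
  have hSne : {i | ∀ w : V, δ ≤ degIn (prefixEdges ω i) w}.Nonempty :=
    ⟨G.edgeFinset.card, fun w => by
      rw [prefixEdges_full, degIn_edgeFinset]; exact hGdeg w⟩
  have hdegJ : ∀ w, degIn J.edgeFinset w = δ := fun w => by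
    rw [degIn_edgeFinset]; exact hJ w
  have hxw : ∀ w : V, (u = w ∨ v = w) → w ∈ s(u, v) := by
    rintro w (rfl | rfl)
    · exact Sym2.mem_mk_left _ _
    · exact Sym2.mem_mk_right _ _
  constructor
  · rintro ⟨hsub, ⟨hx1, hx2⟩, hdu, hdv⟩
    set k := stopIndex δ ω with hk
    rw [mem_prefixEdges] at hx1
    obtain ⟨hxG', hx1'⟩ := hx1
    have hx1 : ((ω.symm ⟨s(u, v), hxG⟩ : Fin G.edgeFinset.card) : ℕ) < k := hx1'
    have hx2' : ¬ (((ω.symm ⟨s(u, v), hxG⟩ : Fin G.edgeFinset.card) : ℕ) < k - 1) := fun hcon =>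
      hx2 ((mem_prefixEdges ω _ s(u, v)).2 ⟨hxG, hcon⟩)
    have hJfinal : ∀ e ∈ J.edgeFinset, e ∈ finalEdges δ ω := fun e he =>
      hsub (SimpleGraph.mem_edgeFinset.1 he)
    have hposne : ∀ e, ∀ he : e ∈ G.edgeFinset, e ≠ s(u, v) →
        ((ω.symm ⟨e, he⟩ : Fin G.edgeFinset.card) : ℕ) ≠ ((ω.symm ⟨s(u, v), hxG⟩ : Fin G.edgeFinset.card) : ℕ) := by
      intro e he hene hcon
      apply hene
      have h5 : ω.symm ⟨e, he⟩ = ω.symm ⟨s(u, v), hxG⟩ := Fin.ext hcon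
      exact congrArg Subtype.val (ω.symm.injective h5)
    constructor
    · intro e he heJ hene
      have h1 := hJfinal e heJ
      rw [finalEdges, mem_prefixEdges] at h1
      obtain ⟨he', hlt'⟩ := h1
      have hlt : ((ω.symm ⟨e, he⟩ : Fin G.edgeFinset.card) : ℕ) < k := hlt'
      rw [Fin.lt_def]
      have := hposne e he hene
      omega
    · intro e he heJ hmem
      by_contra hcon
      rw [not_lt, Fin.le_def] at hcon
      have hne := hposne e he (fun h' => heJ (h' ▸ hxJ))
      have hefin : e ∈ finalEdges δ ω := by
        rw [finalEdges, mem_prefixEdges]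
        exact ⟨he, by omega⟩
      have hbig : ∀ w : V, w ∈ e → degIn (finalEdges δ ω) w = δ → False := by
        intro w hwe hdw
        have hsubset : insert e (J.edgeFinset.filter (fun e' => w ∈ e'))
            ⊆ (finalEdges δ ω).filter (fun e' => w ∈ e') := by
          intro e' he'
          rw [Finset.mem_insert] at he'
          rcases he' with rfl | he'
          · exact Finset.mem_filter.2 ⟨hefin, hwe⟩
          · rw [Finset.mem_filter] at he' ⊢
            exact ⟨hJfinal _ he'.1, he'.2⟩
        have hcard := Finset.card_le_card hsubset
        rw [Finset.card_insert_of_notMem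
          (fun hmem' => heJ (Finset.mem_filter.1 hmem').1)] at hcard
        have h6 : degIn J.edgeFinset w = δ := hdegJ w
        unfold degIn at h6 hdw
        omega
      rcases hmem with hu | hv
      · exact hbig u hu hdu
      · exact hbig v hv hdv
  · rintro ⟨h1, h2⟩
    have hJsub : J.edgeFinset ⊆ prefixEdges ω (((ω.symm ⟨s(u, v), hxG⟩ : Fin G.edgeFinset.card) : ℕ) + 1) := by
      intro e he
      rw [mem_prefixEdges]
      refine ⟨hJGsub he, ?_⟩
      by_cases hex : e = s(u, v)
      · subst hex
        show ((ω.symm ⟨s(u, v), hxG⟩ : Fin G.edgeFinset.card) : ℕ) < _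
        omega
      · have h3 := h1 e (hJGsub he) he hex
        rw [Fin.lt_def] at h3
        omega
    have hfilterEq : ∀ w : V, (u = w ∨ v = w) →
        (prefixEdges ω (((ω.symm ⟨s(u, v), hxG⟩ : Fin G.edgeFinset.card) : ℕ) + 1)).filter (fun e => w ∈ e)
          = J.edgeFinset.filter (fun e => w ∈ e) := by
      intro w hw
      apply Finset.Subset.antisymm
      · intro e he
        rw [Finset.mem_filter, mem_prefixEdges] at he
        obtain ⟨⟨heG, hlt⟩, hwe⟩ := he
        rw [Finset.mem_filter]
        refine ⟨?_, hwe⟩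
        by_contra hcon
        have h4 := h2 e heG hcon (by rcases hw with rfl | rfl; exacts [Or.inl hwe, Or.inr hwe])
        rw [Fin.lt_def] at h4
        omega
      · exact Finset.filter_subset_filter _ hJsub
    have hlow : ∀ i ≤ ((ω.symm ⟨s(u, v), hxG⟩ : Fin G.edgeFinset.card) : ℕ), ¬ (∀ w : V, δ ≤ degIn (prefixEdges ω i) w) := by
      intro i hi hcon
      have hss : (prefixEdges ω i).filter (fun e => u ∈ e)
          ⊆ (J.edgeFinset.erase s(u, v)).filter (fun e => u ∈ e) := by
        intro e he
        rw [Finset.mem_filter, mem_prefixEdges] at he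
        obtain ⟨⟨heG, hlt⟩, hwe⟩ := he
        have hex : e ≠ s(u, v) := by
          rintro rfl
          have hlt2 : ((ω.symm ⟨s(u, v), hxG⟩ : Fin G.edgeFinset.card) : ℕ) < i := hlt
          omega
        have heJ : e ∈ J.edgeFinset := by
          by_contra hcon2
          have h4 := h2 e heG hcon2 (Or.inl hwe)
          rw [Fin.lt_def] at h4
          omega
        exact Finset.mem_filter.2 ⟨Finset.mem_erase.2 ⟨hex, heJ⟩, hwe⟩
      have hcard := Finset.card_le_card hss
      have hce : ((J.edgeFinset.erase s(u, v)).filter (fun e => u ∈ e)).card = δ - 1 := by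
        rw [Finset.filter_erase,
          Finset.card_erase_of_mem (Finset.mem_filter.2 ⟨hxJ, hxw u (Or.inl rfl)⟩)]
        have h6 : degIn J.edgeFinset u = δ := hdegJ u
        unfold degIn at h6
        omega
      have h7 := hcon u
      unfold degIn at h7
      omega
    have hstop : stopIndex δ ω = ((ω.symm ⟨s(u, v), hxG⟩ : Fin G.edgeFinset.card) : ℕ) + 1 := by
      have hub : stopIndex δ ω ≤ ((ω.symm ⟨s(u, v), hxG⟩ : Fin G.edgeFinset.card) : ℕ) + 1 := Nat.sInf_le (by
        intro w
        rw [← hdegJ w]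
        exact degIn_mono hJsub w)
      have hmem := Nat.sInf_mem hSne
      rw [← stopIndex] at hmem
      by_contra hne
      have hle : stopIndex δ ω ≤ ((ω.symm ⟨s(u, v), hxG⟩ : Fin G.edgeFinset.card) : ℕ) := by omega
      exact hlow _ hle hmem
    have hfin : finalEdges δ ω = prefixEdges ω (((ω.symm ⟨s(u, v), hxG⟩ : Fin G.edgeFinset.card) : ℕ) + 1) := by
      rw [finalEdges, hstop]
    refine ⟨?_, ⟨?_, ?_⟩, ?_, ?_⟩
    · intro e he
      rw [Finset.mem_coe, hfin]
      exact hJsub (SimpleGraph.mem_edgeFinset.2 he)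
    · show s(u, v) ∈ prefixEdges ω (stopIndex δ ω)
      rw [hstop, mem_prefixEdges]
      exact ⟨hxG, by omega⟩
    · rw [hstop]
      simp only [Nat.add_sub_cancel]
      rw [mem_prefixEdges]
      rintro ⟨he', hlt'⟩
      have hlt : ((ω.symm ⟨s(u, v), hxG⟩ : Fin G.edgeFinset.card) : ℕ)
          < ((ω.symm ⟨s(u, v), hxG⟩ : Fin G.edgeFinset.card) : ℕ) := hlt'
      omega
    · rw [hfin]
      unfold degIn
      rw [hfilterEq u (Or.inl rfl)]
      have h6 := hdegJ u
      unfold degIn at h6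
      exact h6
    · rw [hfin]
      unfold degIn
      rw [hfilterEq v (Or.inr rfl)]
      have h6 := hdegJ v
      unfold degIn at h6
      exact h6

end EventChar

section Assembly
variable {V : Type*} [Fintype V] [DecidableEq V]

lemma card_filter_univ {β : Type*} [DecidableEq β] (s : Finset β) (P : β → Prop) [DecidablePred P] :
    (Finset.univ.filter (fun y : {e : β // e ∈ s} => P ↑y)).card = (s.filter P).card := by
  apply Finset.card_bij (fun (a : {e : β // e ∈ s}) _ => (a : β))
  · intro a ha
    rw [Finset.mem_filter] at ha ⊢
    exact ⟨a.2, ha.2⟩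
  · intro a _ b _ hab
    exact Subtype.ext hab
  · intro b hb
    rw [Finset.mem_filter] at hb
    exact ⟨⟨b, hb.1⟩, Finset.mem_filter.2 ⟨Finset.mem_univ _, hb.2⟩, rfl⟩

lemma degree_minus (G J : SimpleGraph V) [DecidableRel G.Adj] [DecidableRel J.Adj]
    (δ : ℕ) (hJG : J ≤ G) (hJ : J.IsRegularOfDegree δ) (w : V) :
    (G.edgeFinset.filter (fun e => e ∉ J.edgeFinset ∧ w ∈ e)).card = G.degree w - δ := by
  classical
  have hJGsub : J.edgeFinset ⊆ G.edgeFinset :=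
    SimpleGraph.edgeFinset_subset_edgeFinset.2 hJG
  have hsum := Finset.card_filter_add_card_filter_not
    (s := G.edgeFinset.filter (fun e => w ∈ e)) (p := fun e => e ∈ J.edgeFinset)
  rw [Finset.filter_filter, Finset.filter_filter] at hsum
  have h1 : G.edgeFinset.filter (fun e => w ∈ e ∧ e ∈ J.edgeFinset)
      = J.edgeFinset.filter (fun e => w ∈ e) := by
    ext e
    simp only [Finset.mem_filter]
    constructor
    · rintro ⟨_, hw, hj⟩; exact ⟨hj, hw⟩
    · rintro ⟨hj, hw⟩; exact ⟨hJGsub hj, hw, hj⟩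
  have h2 : G.edgeFinset.filter (fun e => w ∈ e ∧ e ∉ J.edgeFinset)
      = G.edgeFinset.filter (fun e => e ∉ J.edgeFinset ∧ w ∈ e) := by
    ext e
    simp only [Finset.mem_filter, and_comm]
  rw [h1, h2] at hsum
  have hd1 : (J.edgeFinset.filter (fun e => w ∈ e)).card = δ := by
    have := degIn_edgeFinset J w
    unfold degIn at this
    rw [this]; exact hJ w
  have hd2 : (G.edgeFinset.filter (fun e => w ∈ e)).card = G.degree w := by
    have := degIn_edgeFinset G w
    unfold degIn at this
    rw [this]
  rw [hd1, hd2] at hsum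
  omega

end Assembly

set_option maxHeartbeats 1600000 in
/-- Let `G` be a finite simple graph with minimum degree at least `δ ≥ 1`, let `J` be a
`δ`-regular spanning subgraph of `G` with `h` edges, and let `uv` be an edge of `J`;
write `Δ(w) = deg_G(w) − δ`.  The probability that `J ⊆ G_ω`, `e_{k(ω)} = uv`, and both
`u` and `v` have degree exactly `δ` in `G_ω` equals
`(h−1)!·(Δ(u)+Δ(v))!/(h+Δ(u)+Δ(v))!`. -/
theorem probability_subgraph_last_edge_and_both_low_degree
    {V : Type*} [Fintype V] [DecidableEq V]
    (G J : SimpleGraph V) [DecidableRel G.Adj] [DecidableRel J.Adj]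
    (δ : ℕ) (hδ : 1 ≤ δ) (hGdeg : ∀ w : V, δ ≤ G.degree w)
    (hJG : J ≤ G) (hJ : J.IsRegularOfDegree δ)
    (u v : V) (huv : J.Adj u v) (h : ℕ) (hh : h = J.edgeFinset.card) :
    ({ω : Fin G.edgeFinset.card ≃ {e : Sym2 V // e ∈ G.edgeFinset} |
        J.edgeSet ⊆ ↑(finalEdges δ ω) ∧ lastEdgeIs δ ω s(u, v) ∧
          degIn (finalEdges δ ω) u = δ ∧ degIn (finalEdges δ ω) v = δ}.ncard : ℝ) /
      (Fintype.card (Fin G.edgeFinset.card ≃ {e : Sym2 V // e ∈ G.edgeFinset}) : ℝ) =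
    ((h - 1).factorial : ℝ) * (((G.degree u - δ) + (G.degree v - δ)).factorial : ℝ) /
      ((h + (G.degree u - δ) + (G.degree v - δ)).factorial : ℝ) := by
  classical
  have hxG : s(u, v) ∈ G.edgeFinset := SimpleGraph.mem_edgeFinset.2 (hJG huv)
  have hxJ : s(u, v) ∈ J.edgeFinset := SimpleGraph.mem_edgeFinset.2 huv
  have hJGsub : J.edgeFinset ⊆ G.edgeFinset :=
    SimpleGraph.edgeFinset_subset_edgeFinset.2 hJG
  set x : {e : Sym2 V // e ∈ G.edgeFinset} := ⟨s(u, v), hxG⟩ with hxdef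
  set B : Finset {e : Sym2 V // e ∈ G.edgeFinset} :=
    Finset.univ.filter (fun y => (↑y ∈ J.edgeFinset ∧ (y : Sym2 V) ≠ s(u, v))) with hBdef
  set A : Finset {e : Sym2 V // e ∈ G.edgeFinset} :=
    Finset.univ.filter
      (fun y => ((y : Sym2 V) ∉ J.edgeFinset ∧ (u ∈ (y : Sym2 V) ∨ v ∈ (y : Sym2 V)))) with hAdef
  have hEvent : {ω : Fin G.edgeFinset.card ≃ {e : Sym2 V // e ∈ G.edgeFinset} |
        J.edgeSet ⊆ ↑(finalEdges δ ω) ∧ lastEdgeIs δ ω s(u, v) ∧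
          degIn (finalEdges δ ω) u = δ ∧ degIn (finalEdges δ ω) v = δ}
      = {ω : Fin G.edgeFinset.card ≃ {e : Sym2 V // e ∈ G.edgeFinset} |
          (∀ y ∈ B, ω.symm y < ω.symm x) ∧ (∀ z ∈ A, ω.symm x < ω.symm z)} := by
    ext ω
    rw [Set.mem_setOf_eq, Set.mem_setOf_eq,
      event_iff G J δ hδ hGdeg hJG hJ u v huv hxG ω]
    constructor
    · rintro ⟨h1, h2⟩
      constructor
      · intro y hy
        rw [hBdef, Finset.mem_filter] at hy
        exact h1 ↑y y.2 hy.2.1 hy.2.2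
      · intro z hz
        rw [hAdef, Finset.mem_filter] at hz
        exact h2 ↑z z.2 hz.2.1 hz.2.2
    · rintro ⟨h1, h2⟩
      constructor
      · intro e he heJ hene
        exact h1 ⟨e, he⟩ (Finset.mem_filter.2 ⟨Finset.mem_univ _, heJ, hene⟩)
      · intro e he heJ hmem
        exact h2 ⟨e, he⟩ (Finset.mem_filter.2 ⟨Finset.mem_univ _, heJ, hmem⟩)
  have hxB : x ∉ B := by
    rw [hBdef, Finset.mem_filter]
    rintro ⟨-, -, hne⟩
    exact hne rfl
  have hxA : x ∉ A := by
    rw [hAdef, Finset.mem_filter]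
    rintro ⟨-, hne, -⟩
    exact hne hxJ
  have hBA : Disjoint B A := by
    rw [Finset.disjoint_left]
    intro y hy hy'
    rw [hBdef, Finset.mem_filter] at hy
    rw [hAdef, Finset.mem_filter] at hy'
    exact hy'.2.1 hy.2.1
  have hcount := count_main (Fintype.card_coe G.edgeFinset) x B A hxB hxA hBA
  have hh1 : 1 ≤ h := by
    rw [hh]
    exact Finset.card_pos.2 ⟨s(u, v), hxJ⟩
  have hBcard : B.card = h - 1 := by
    rw [hBdef, card_filter_univ G.edgeFinset (fun e => e ∈ J.edgeFinset ∧ e ≠ s(u, v))]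
    have heq : G.edgeFinset.filter (fun e => e ∈ J.edgeFinset ∧ e ≠ s(u, v))
        = J.edgeFinset.erase s(u, v) := by
      ext e
      rw [Finset.mem_filter, Finset.mem_erase]
      constructor
      · rintro ⟨-, hj, hne⟩; exact ⟨hne, hj⟩
      · rintro ⟨hne, hj⟩; exact ⟨hJGsub hj, hj, hne⟩
    rw [heq, Finset.card_erase_of_mem hxJ, hh]
  have hAcard : A.card = (G.degree u - δ) + (G.degree v - δ) := by
    rw [hAdef, card_filter_univ G.edgeFinset (fun e => e ∉ J.edgeFinset ∧ (u ∈ e ∨ v ∈ e))]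
    have hsplit : G.edgeFinset.filter (fun e => e ∉ J.edgeFinset ∧ (u ∈ e ∨ v ∈ e))
        = (G.edgeFinset.filter (fun e => e ∉ J.edgeFinset ∧ u ∈ e))
          ∪ (G.edgeFinset.filter (fun e => e ∉ J.edgeFinset ∧ v ∈ e)) := by
      ext e
      simp only [Finset.mem_filter, Finset.mem_union]
      constructor
      · rintro ⟨hg, hj, (hu | hv)⟩
        · exact Or.inl ⟨hg, hj, hu⟩
        · exact Or.inr ⟨hg, hj, hv⟩
      · rintro (⟨hg, hj, hu⟩ | ⟨hg, hj, hv⟩)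
        · exact ⟨hg, hj, Or.inl hu⟩
        · exact ⟨hg, hj, Or.inr hv⟩
    have hdisj : Disjoint (G.edgeFinset.filter (fun e => e ∉ J.edgeFinset ∧ u ∈ e))
        (G.edgeFinset.filter (fun e => e ∉ J.edgeFinset ∧ v ∈ e)) := by
      rw [Finset.disjoint_left]
      intro e he1 he2
      rw [Finset.mem_filter] at he1 he2
      have hne : u ≠ v := huv.ne
      have heq2 : e = s(u, v) := (Sym2.mem_and_mem_iff hne).1 ⟨he1.2.2, he2.2.2⟩
      exact he1.2.1 (heq2 ▸ hxJ)
    rw [hsplit, Finset.card_union_of_disjoint hdisj,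
      degree_minus G J δ hJG hJ u, degree_minus G J δ hJG hJ v]
  have ht' : h - 1 + ((G.degree u - δ) + (G.degree v - δ)) + 1
      = h + (G.degree u - δ) + (G.degree v - δ) := by omega
  rw [hBcard, hAcard, ht'] at hcount
  have hset : ({ω : Fin G.edgeFinset.card ≃ {e : Sym2 V // e ∈ G.edgeFinset} |
        J.edgeSet ⊆ ↑(finalEdges δ ω) ∧ lastEdgeIs δ ω s(u, v) ∧
          degIn (finalEdges δ ω) u = δ ∧ degIn (finalEdges δ ω) v = δ}.ncard)
      = Nat.card {σ : Fin G.edgeFinset.card ≃ {e : Sym2 V // e ∈ G.edgeFinset} //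
          (∀ y ∈ B, σ.symm y < σ.symm x) ∧ (∀ z ∈ A, σ.symm x < σ.symm z)} := by
    rw [hEvent]
    exact (Nat.card_coe_set_eq _).symm
  have hden : Fintype.card (Fin G.edgeFinset.card ≃ {e : Sym2 V // e ∈ G.edgeFinset})
      = (G.edgeFinset.card).factorial := by
    rw [Fintype.card_equiv (Fintype.equivFinOfCardEq (Fintype.card_coe G.edgeFinset)).symm,
      Fintype.card_fin]
  rw [hset, hden]
  rw [div_eq_div_iff (by positivity) (by positivity)]
  exact_mod_cast congrArg (Nat.cast : ℕ → ℝ) hcount
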